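/- arXiv:2104.01417 — 3 statements merged into one kernel-verified Lean document; each statement's English description precedes it below -/
import Mathlib

section
/- For every natural number n, the number of crossingless matchings of 2n points, i.e. the number of fixed-point-free involutions σ of Fin (2n) such that there are no indices i < j < σ(i) < σ(j), equals the n-th Catalan number. -/
/-- A finset admitting a fixed-point-free involution has even cardinality. -/
lemma even_card_of_invol {α : Type*} [DecidableEq α] (s : Finset α) (f : α → α)
    (hmem : ∀ a ∈ s, f a ∈ s) (hinv : ∀ a ∈ s, f (f a) = a) (hne : ∀ a ∈ s, f a ≠ a) :
    Even s.card := by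
  induction s using Finset.strongInduction with
  | _ s ih =>
    rcases s.eq_empty_or_nonempty with rfl | ⟨a, ha⟩
    · simp
    · have hfa : f a ∈ s := hmem a ha
      have hne' : f a ≠ a := hne a ha
      set t := (s.erase a).erase (f a) with ht
      have hts : t ⊂ s := by
        refine Finset.ssubset_of_subset_of_ssubset ?_ (Finset.erase_ssubset ha)
        exact Finset.erase_subset _ _
      have hcard : s.card = t.card + 2 := by
        rw [ht, Finset.card_erase_of_mem, Finset.card_erase_of_mem ha]
        · have : 1 ≤ s.card := Finset.card_pos.mpr ⟨a, ha⟩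
          have h2 : 2 ≤ s.card := Finset.one_lt_card.mpr ⟨a, ha, f a, hfa, fun h => hne' h.symm⟩
          omega
        · exact Finset.mem_erase.mpr ⟨hne', hfa⟩
      have hT : Even t.card := by
        refine ih t hts (fun b hb => ?_) (fun b hb => hinv b ?_) (fun b hb => hne b ?_)
        · rw [ht, Finset.mem_erase, Finset.mem_erase] at hb ⊢
          refine ⟨?_, ?_, hmem b hb.2.2⟩
          · intro h; exact hb.2.1 (by rw [← hinv b hb.2.2, h, hinv a ha])
          · intro h; exact hb.1 (by rw [← hinv b hb.2.2, h])
        · exact (Finset.mem_erase.mp (Finset.mem_erase.mp hb).2).2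
        · exact (Finset.mem_erase.mp (Finset.mem_erase.mp hb).2).2
      rw [hcard]; exact hT.add even_two

/-- Glue an inner matching on `2*k` points and an outer matching on `2*(m-k)` points,
together with the arc `0 — 2*k+1`, into a matching on `2*(m+1)` points. -/
def glue (m k : ℕ) (hk : k ≤ m) (f : Fin (2*k) → Fin (2*k))
    (g : Fin (2*(m-k)) → Fin (2*(m-k))) : Fin (2*(m+1)) → Fin (2*(m+1)) := fun i =>
  if h0 : (i : ℕ) = 0 then ⟨2*k+1, by omega⟩
  else if h1 : (i : ℕ) < 2*k+1 then
    ⟨(f ⟨(i:ℕ)-1, by omega⟩ : ℕ) + 1, by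
      have := (f ⟨(i:ℕ)-1, by omega⟩).isLt; omega⟩
  else if h2 : (i : ℕ) = 2*k+1 then ⟨0, by omega⟩
  else
    ⟨(g ⟨(i:ℕ)-(2*k+2), by have := i.isLt; omega⟩ : ℕ) + (2*k+2), by
      have := (g ⟨(i:ℕ)-(2*k+2), by have := i.isLt; omega⟩).isLt; omega⟩

section
variable {m k : ℕ} (hk : k ≤ m) (f : Fin (2*k) → Fin (2*k)) (g : Fin (2*(m-k)) → Fin (2*(m-k)))

lemma pos_cases (i : Fin (2*(m+1))) :
    (i:ℕ) = 0 ∨ (∃ j : Fin (2*k), (i:ℕ) = (j:ℕ)+1) ∨ (i:ℕ) = 2*k+1 ∨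
      ∃ j : Fin (2*(m-k)), (i:ℕ) = (j:ℕ)+(2*k+2) := by
  have hi := i.isLt
  rcases Nat.lt_or_ge (i:ℕ) (2*k+1) with h | h
  · rcases Nat.eq_zero_or_pos (i:ℕ) with h0 | h0
    · exact Or.inl h0
    · exact Or.inr (Or.inl ⟨⟨(i:ℕ)-1, by omega⟩, by simp; omega⟩)
  · rcases Nat.eq_or_lt_of_le h with h2 | h2
    · exact Or.inr (Or.inr (Or.inl h2.symm))
    · exact Or.inr (Or.inr (Or.inr ⟨⟨(i:ℕ)-(2*k+2), by omega⟩, by simp; omega⟩))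

lemma glue_zero (i : Fin (2*(m+1))) (h : (i:ℕ) = 0) :
    (glue m k hk f g i : ℕ) = 2*k+1 := by
  simp only [glue, h]; rfl

lemma glue_inner (i : Fin (2*(m+1))) (j : Fin (2*k)) (h : (i:ℕ) = (j:ℕ)+1) :
    (glue m k hk f g i : ℕ) = (f j : ℕ) + 1 := by
  have hj := j.isLt
  simp only [glue]
  rw [dif_neg (by omega), dif_pos (by omega)]
  have hidx : (⟨(i:ℕ)-1, by omega⟩ : Fin (2*k)) = j := Fin.ext (by simp; omega)
  simp only [hidx]

lemma glue_top (i : Fin (2*(m+1))) (h : (i:ℕ) = 2*k+1) :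
    (glue m k hk f g i : ℕ) = 0 := by
  simp only [glue]
  rw [dif_neg (by omega), dif_neg (by omega), dif_pos h]

lemma glue_outer (i : Fin (2*(m+1))) (j : Fin (2*(m-k))) (h : (i:ℕ) = (j:ℕ)+(2*k+2)) :
    (glue m k hk f g i : ℕ) = (g j : ℕ) + (2*k+2) := by
  simp only [glue]
  rw [dif_neg (by omega), dif_neg (by omega), dif_neg (by omega)]
  have hi := i.isLt
  have hidx : (⟨(i:ℕ)-(2*k+2), by omega⟩ : Fin (2*(m-k))) = j := Fin.ext (by simp; omega)
  simp only [hidx]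

lemma glue_involutive (hf : Function.Involutive f) (hg : Function.Involutive g) :
    Function.Involutive (glue m k hk f g) := by
  intro i
  apply Fin.ext
  rcases pos_cases i with h | ⟨j, h⟩ | h | ⟨j, h⟩
  · rw [glue_top _ _ _ _ (by rw [glue_zero _ _ _ i h]), h]
  · rw [glue_inner _ _ _ _ (f j) (glue_inner _ _ _ i j h), hf j, h]
  · rw [glue_zero _ _ _ _ (by rw [glue_top _ _ _ i h]), h]
  · rw [glue_outer _ _ _ _ (g j) (glue_outer _ _ _ i j h), hg j, h]

lemma glue_ne (hf : ∀ i, f i ≠ i) (hg : ∀ i, g i ≠ i) :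
    ∀ i, glue m k hk f g i ≠ i := by
  intro i hcon
  have hv : (glue m k hk f g i : ℕ) = (i:ℕ) := congrArg Fin.val hcon
  rcases pos_cases i with h | ⟨j, h⟩ | h | ⟨j, h⟩
  · rw [glue_zero _ _ _ i h, h] at hv; omega
  · rw [glue_inner _ _ _ i j h, h] at hv
    exact hf j (Fin.ext (by omega))
  · rw [glue_top _ _ _ i h, h] at hv; omega
  · rw [glue_outer _ _ _ i j h, h] at hv
    exact hg j (Fin.ext (by omega))

lemma glue_noncrossing
    (hf : ¬∃ i j : Fin (2*k), i < j ∧ j < f i ∧ f i < f j)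
    (hg : ¬∃ i j : Fin (2*(m-k)), i < j ∧ j < g i ∧ g i < g j) :
    ¬∃ i j : Fin (2*(m+1)), i < j ∧ j < glue m k hk f g i ∧
      glue m k hk f g i < glue m k hk f g j := by
  rintro ⟨i, j, hij, hji, hcross⟩
  rw [Fin.lt_def] at hij hji hcross
  rcases pos_cases (k := k) i with h | ⟨a, h⟩ | h | ⟨a, h⟩
  · -- i = 0 : σ i = 2k+1, so j < 2k+1, j > 0, hence σ j ≤ 2k, contradiction
    rw [glue_zero _ _ _ i h] at hji hcross
    rcases pos_cases (k := k) j with h' | ⟨b, h'⟩ | h' | ⟨b, h'⟩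
    · omega
    · rw [glue_inner _ _ _ j b h'] at hcross; have := (f b).isLt; omega
    · omega
    · omega
  · -- inner
    rw [glue_inner _ _ _ i a h] at hji hcross
    have hfa := (f a).isLt
    rcases pos_cases (k := k) j with h' | ⟨b, h'⟩ | h' | ⟨b, h'⟩
    · omega
    · rw [glue_inner _ _ _ j b h'] at hcross
      exact hf ⟨a, b, by omega, by omega, by omega⟩
    · omega
    · omega
  · rw [glue_top _ _ _ i h] at hji; omega
  · -- outer
    rw [glue_outer _ _ _ i a h] at hji hcross
    have hga := (g a).isLt
    rcases pos_cases (k := k) j with h' | ⟨b, h'⟩ | h' | ⟨b, h'⟩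
    · omega
    · have := b.isLt; omega
    · omega
    · rw [glue_outer _ _ _ j b h'] at hcross
      exact hg ⟨a, b, by omega, by omega, by omega⟩

end

section
variable (m k : ℕ) (hk : k ≤ m)

def liftIn (j : Fin (2*k)) : Fin (2*(m+1)) := ⟨(j:ℕ)+1, by have := j.isLt; omega⟩
def liftOut (j : Fin (2*(m-k))) : Fin (2*(m+1)) := ⟨(j:ℕ)+(2*k+2), by have := j.isLt; omega⟩

@[simp] lemma liftIn_val (j : Fin (2*k)) : (liftIn m k hk j : ℕ) = (j:ℕ)+1 := rfl
@[simp] lemma liftOut_val (j : Fin (2*(m-k))) :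
    (liftOut m k hk j : ℕ) = (j:ℕ)+(2*k+2) := rfl

def splitIn (σ : Fin (2*(m+1)) → Fin (2*(m+1))) (j : Fin (2*k)) : Fin (2*k) :=
  if h : 0 < (σ (liftIn m k hk j) : ℕ) ∧ (σ (liftIn m k hk j) : ℕ) < 2*k+1
  then ⟨(σ (liftIn m k hk j) : ℕ) - 1, by omega⟩ else j

def splitOut (σ : Fin (2*(m+1)) → Fin (2*(m+1))) (j : Fin (2*(m-k))) : Fin (2*(m-k)) :=
  if h : 2*k+1 < (σ (liftOut m k hk j) : ℕ)
  then ⟨(σ (liftOut m k hk j) : ℕ) - (2*k+2), by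
    have := (σ (liftOut m k hk j)).isLt; have := j.isLt; omega⟩
  else j

variable (σ : Fin (2*(m+1)) → Fin (2*(m+1)))
variable (hA' : ∀ j : Fin (2*k), 0 < (σ (liftIn m k hk j) : ℕ) ∧
  (σ (liftIn m k hk j) : ℕ) < 2*k+1)
variable (hB' : ∀ j : Fin (2*(m-k)), 2*k+1 < (σ (liftOut m k hk j) : ℕ))

include hA' in
lemma splitIn_val (j : Fin (2*k)) :
    (splitIn m k hk σ j : ℕ) = (σ (liftIn m k hk j) : ℕ) - 1 := by
  rw [splitIn, dif_pos (hA' j)]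

include hB' in
lemma splitOut_val (j : Fin (2*(m-k))) :
    (splitOut m k hk σ j : ℕ) = (σ (liftOut m k hk j) : ℕ) - (2*k+2) := by
  rw [splitOut, dif_pos (hB' j)]

include hA' in
lemma liftIn_splitIn (j : Fin (2*k)) :
    liftIn m k hk (splitIn m k hk σ j) = σ (liftIn m k hk j) := by
  apply Fin.ext
  rw [liftIn_val, splitIn_val m k hk σ hA']
  have := hA' j; omega

include hB' in
lemma liftOut_splitOut (j : Fin (2*(m-k))) :
    liftOut m k hk (splitOut m k hk σ j) = σ (liftOut m k hk j) := by
  apply Fin.ext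
  rw [liftOut_val, splitOut_val m k hk σ hB']
  have := hB' j; omega

variable (hinv : ∀ i, σ (σ i) = i)

include hA' hinv in
lemma splitIn_invol : Function.Involutive (splitIn m k hk σ) := by
  intro j
  apply Fin.ext
  rw [splitIn_val m k hk σ hA', liftIn_splitIn m k hk σ hA', hinv]
  rw [liftIn_val]
  omega

include hB' hinv in
lemma splitOut_invol : Function.Involutive (splitOut m k hk σ) := by
  intro j
  apply Fin.ext
  rw [splitOut_val m k hk σ hB', liftOut_splitOut m k hk σ hB', hinv]
  rw [liftOut_val]
  omega

variable (hne : ∀ i, σ i ≠ i)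

include hA' hne in
lemma splitIn_ne : ∀ j, splitIn m k hk σ j ≠ j := by
  intro j h
  have hv := congrArg Fin.val h
  rw [splitIn_val m k hk σ hA'] at hv
  have := hA' j
  exact hne (liftIn m k hk j) (Fin.ext (by rw [liftIn_val]; omega))

include hB' hne in
lemma splitOut_ne : ∀ j, splitOut m k hk σ j ≠ j := by
  intro j h
  have hv := congrArg Fin.val h
  rw [splitOut_val m k hk σ hB'] at hv
  have := hB' j
  exact hne (liftOut m k hk j) (Fin.ext (by rw [liftOut_val]; omega))

variable (hnc : ¬∃ i j : Fin (2*(m+1)), i < j ∧ j < σ i ∧ σ i < σ j)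

include hA' hnc in
lemma splitIn_nc :
    ¬∃ a b : Fin (2*k), a < b ∧ b < splitIn m k hk σ a ∧
      splitIn m k hk σ a < splitIn m k hk σ b := by
  rintro ⟨a, b, h1, h2, h3⟩
  rw [Fin.lt_def] at h1 h2 h3
  rw [splitIn_val m k hk σ hA'] at h2 h3
  rw [splitIn_val m k hk σ hA'] at h3
  have ha := hA' a
  have hb := hA' b
  have la : (liftIn m k hk a : ℕ) = (a:ℕ)+1 := rfl
  have lb : (liftIn m k hk b : ℕ) = (b:ℕ)+1 := rfl
  refine hnc ⟨liftIn m k hk a, liftIn m k hk b, ?_, ?_, ?_⟩ <;>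
    rw [Fin.lt_def] <;> omega

include hB' hnc in
lemma splitOut_nc :
    ¬∃ a b : Fin (2*(m-k)), a < b ∧ b < splitOut m k hk σ a ∧
      splitOut m k hk σ a < splitOut m k hk σ b := by
  rintro ⟨a, b, h1, h2, h3⟩
  rw [Fin.lt_def] at h1 h2 h3
  rw [splitOut_val m k hk σ hB'] at h2 h3
  rw [splitOut_val m k hk σ hB'] at h3
  have ha := hB' a
  have hb := hB' b
  have la : (liftOut m k hk a : ℕ) = (a:ℕ)+(2*k+2) := rfl
  have lb : (liftOut m k hk b : ℕ) = (b:ℕ)+(2*k+2) := rfl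
  refine hnc ⟨liftOut m k hk a, liftOut m k hk b, ?_, ?_, ?_⟩ <;>
    rw [Fin.lt_def] <;> omega

end
section
variable (m k : ℕ) (hk : k ≤ m) (σ : Fin (2*(m+1)) → Fin (2*(m+1)))
variable (hA' : ∀ j : Fin (2*k), 0 < (σ (liftIn m k hk j) : ℕ) ∧
  (σ (liftIn m k hk j) : ℕ) < 2*k+1)
variable (hB' : ∀ j : Fin (2*(m-k)), 2*k+1 < (σ (liftOut m k hk j) : ℕ))
variable (hinv : ∀ i, σ (σ i) = i)
variable (hσ0 : (σ ⟨0, by omega⟩ : ℕ) = 2*k+1)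

include hA' hB' hinv hσ0 in
lemma glue_splits : glue m k hk (splitIn m k hk σ) (splitOut m k hk σ) = σ := by
  funext i
  apply Fin.ext
  rcases pos_cases (k := k) i with h | ⟨j, h⟩ | h | ⟨j, h⟩
  · rw [glue_zero _ _ _ i h]
    have hi : i = ⟨0, by omega⟩ := Fin.ext h
    rw [hi, hσ0]
  · rw [glue_inner _ _ _ i j h]
    have hi : liftIn m k hk j = i := Fin.ext (by rw [liftIn_val]; omega)
    have hAj := hA' j
    rw [splitIn_val m k hk σ hA', hi] at *
    rw [hi] at hAj
    omega
  · rw [glue_top _ _ _ i h]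
    have hi : i = σ ⟨0, by omega⟩ := Fin.ext (by rw [hσ0]; exact h)
    rw [hi, hinv]
  · rw [glue_outer _ _ _ i j h]
    have hi : liftOut m k hk j = i := Fin.ext (by rw [liftOut_val]; omega)
    have hBj := hB' j
    rw [splitOut_val m k hk σ hB', hi] at *
    rw [hi] at hBj
    omega

end
/-- Every noncrossing matching on `2*(m+1)` points arises by gluing. -/
lemma exists_glue_eq (m : ℕ) (σ : Equiv.Perm (Fin (2*(m+1))))
    (hinv : ∀ i, σ (σ i) = i) (hne : ∀ i, σ i ≠ i)
    (hnc : ¬∃ i j : Fin (2*(m+1)), i < j ∧ j < σ i ∧ σ i < σ j) :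
    ∃ (k : ℕ) (hk : k ≤ m) (f : Fin (2*k) → Fin (2*k))
      (g : Fin (2*(m-k)) → Fin (2*(m-k))),
      Function.Involutive f ∧ (∀ i, f i ≠ i) ∧
      (¬∃ i j : Fin (2*k), i < j ∧ j < f i ∧ f i < f j) ∧
      Function.Involutive g ∧ (∀ i, g i ≠ i) ∧
      (¬∃ i j : Fin (2*(m-k)), i < j ∧ j < g i ∧ g i < g j) ∧
      glue m k hk f g = ⇑σ := by
  set z : Fin (2*(m+1)) := ⟨0, by omega⟩ with hz
  set t : ℕ := (σ z : ℕ) with htdef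
  have hz0 : (z:ℕ) = 0 := rfl
  have hσinj : Function.Injective ⇑σ := σ.injective
  have ht1 : 1 ≤ t := by
    rcases Nat.eq_zero_or_pos t with h | h
    · exact absurd (Fin.ext (show (σ z:ℕ) = (z:ℕ) by omega) : σ z = z) (hne z)
    · omega
  have htlt : t < 2*(m+1) := (σ z).isLt
  -- Claim A: the open interval (0, t) is invariant under σ
  have hA : ∀ i : Fin (2*(m+1)), 0 < (i:ℕ) → (i:ℕ) < t → 0 < (σ i:ℕ) ∧ (σ i:ℕ) < t := by
    intro i h0 hit
    have hσine : σ i ≠ z := by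
      intro h
      have : i = σ z := by rw [← hinv i, h]
      rw [this] at hit; omega
    have h1 : 0 < (σ i : ℕ) := by
      rcases Nat.eq_zero_or_pos (σ i : ℕ) with h | h
      · exact absurd (Fin.ext (show (σ i:ℕ) = (z:ℕ) by omega) : σ i = z) hσine
      · exact h
    have h2 : (σ i : ℕ) ≠ t := by
      intro h
      have : i = z := hσinj (Fin.ext (show (σ i:ℕ) = (σ z:ℕ) by omega))
      rw [this] at h0; omega
    have h3 : ¬ t < (σ i : ℕ) := by
      intro h
      exact hnc ⟨z, i, by rw [Fin.lt_def]; omega,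
        by rw [Fin.lt_def]; omega, by rw [Fin.lt_def]; omega⟩
    omega
  -- Claim B: points above t stay above t
  have hB : ∀ i : Fin (2*(m+1)), t < (i:ℕ) → t < (σ i:ℕ) := by
    intro i hti
    have hne0 : (σ i : ℕ) ≠ 0 := by
      intro h
      have h2 : σ i = z := Fin.ext (show (σ i:ℕ) = (z:ℕ) by omega)
      have : i = σ z := by rw [← hinv i, h2]
      rw [this] at hti; omega
    have hnet : (σ i : ℕ) ≠ t := by
      intro h
      have : i = z := hσinj (Fin.ext (show (σ i:ℕ) = (σ z:ℕ) by omega))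
      rw [this] at hti; omega
    by_contra hcon
    push_neg at hcon
    have h1 : 0 < (σ i : ℕ) := by omega
    have h2 : (σ i : ℕ) < t := by omega
    refine hnc ⟨z, σ i, ?_, ?_, ?_⟩
    · rw [Fin.lt_def]; omega
    · rw [Fin.lt_def]; omega
    · rw [Fin.lt_def, hinv i]; omega
  -- parity: t = 2*k+1
  have hparity : Even (t - 1) := by
    have := even_card_of_invol
      (Finset.univ.filter (fun i : Fin (2*(m+1)) => 0 < (i:ℕ) ∧ (i:ℕ) < t)) ⇑σ
      (by intro a ha
          simp only [Finset.mem_filter, Finset.mem_univ, true_and] at ha ⊢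
          exact hA a ha.1 ha.2)
      (by intro a _; exact hinv a)
      (by intro a _; exact hne a)
    have hcard : (Finset.univ.filter
        (fun i : Fin (2*(m+1)) => 0 < (i:ℕ) ∧ (i:ℕ) < t)).card = t - 1 := by
      have : (Finset.univ.filter (fun i : Fin (2*(m+1)) => 0 < (i:ℕ) ∧ (i:ℕ) < t))
          = Finset.Ioo z (σ z) := by
        ext i
        simp only [Finset.mem_filter, Finset.mem_univ, true_and, Finset.mem_Ioo,
          Fin.lt_def]
        exact Iff.rfl
      rw [this, Fin.card_Ioo]
      omega
    rwa [hcard] at this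
  obtain ⟨k, hk2⟩ : ∃ k, t = 2*k+1 := by
    rcases hparity with ⟨c, hc⟩
    exact ⟨c, by omega⟩
  have hk : k ≤ m := by omega
  have hA' : ∀ j : Fin (2*k), 0 < (σ (liftIn m k hk j) : ℕ) ∧
      (σ (liftIn m k hk j) : ℕ) < 2*k+1 := by
    intro j
    have := hA (liftIn m k hk j) (by rw [liftIn_val]; omega)
      (by rw [liftIn_val]; have := j.isLt; omega)
    omega
  have hB' : ∀ j : Fin (2*(m-k)), 2*k+1 < (σ (liftOut m k hk j) : ℕ) := by
    intro j
    have := hB (liftOut m k hk j) (by rw [liftOut_val]; omega)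
    omega
  have hσ0 : (σ ⟨0, by omega⟩ : ℕ) = 2*k+1 := by rw [← hk2]
  exact ⟨k, hk, splitIn m k hk ⇑σ, splitOut m k hk ⇑σ,
    splitIn_invol m k hk ⇑σ hA' hinv, splitIn_ne m k hk ⇑σ hA' hne,
    splitIn_nc m k hk ⇑σ hA' hnc,
    splitOut_invol m k hk ⇑σ hB' hinv, splitOut_ne m k hk ⇑σ hB' hne,
    splitOut_nc m k hk ⇑σ hB' hnc,
    glue_splits m k hk ⇑σ hA' hB' hinv hσ0⟩
/-- The subtype of noncrossing perfect matchings on `2*n` points. -/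
def NCM (n : ℕ) := {σ : Equiv.Perm (Fin (2*n)) //
    (∀ i, σ (σ i) = i) ∧ (∀ i, σ i ≠ i) ∧
    ¬∃ i j : Fin (2*n), i < j ∧ j < σ i ∧ σ i < σ j}

/-- Gluing as a map into matchings of `2*(m+1)` points. -/
def glueNCM (m : ℕ) (x : Σ k : Fin (m+1), NCM k × NCM (m - k)) : NCM (m+1) :=
  let k := (x.1 : ℕ)
  let hk : k ≤ m := by have := x.1.isLt; omega
  let f := x.2.1
  let g := x.2.2
  ⟨(glue_involutive hk ⇑f.1 ⇑g.1 f.2.1 g.2.1).toPerm,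
    fun i => glue_involutive hk ⇑f.1 ⇑g.1 f.2.1 g.2.1 i,
    glue_ne hk ⇑f.1 ⇑g.1 f.2.2.1 g.2.2.1,
    glue_noncrossing hk ⇑f.1 ⇑g.1 f.2.2.2 g.2.2.2⟩

lemma glueNCM_bijective (m : ℕ) : Function.Bijective (glueNCM m) := by
  constructor
  · rintro ⟨k, ⟨τ, hτ⟩, ⟨ρ, hρ⟩⟩ ⟨k', ⟨τ', hτ'⟩, ⟨ρ', hρ'⟩⟩ heq
    have hk : (k:ℕ) ≤ m := by have := k.isLt; omega
    have hk' : (k':ℕ) ≤ m := by have := k'.isLt; omega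
    have hfun : glue m k hk ⇑τ ⇑ρ = glue m k' hk' ⇑τ' ⇑ρ' :=
      congrArg (fun e : NCM (m+1) => (⇑e.1 : Fin (2*(m+1)) → Fin (2*(m+1)))) heq
    have hkk : (k:ℕ) = (k':ℕ) := by
      have h0 := congrArg Fin.val (congrFun hfun ⟨0, by omega⟩)
      rw [glue_zero hk ⇑τ ⇑ρ _ rfl, glue_zero hk' ⇑τ' ⇑ρ' _ rfl] at h0
      omega
    have hkk' : k = k' := Fin.ext hkk
    subst hkk'
    have hτeq : τ = τ' := by
      apply Equiv.coe_fn_injective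
      funext j
      apply Fin.ext
      have h1 := congrArg Fin.val (congrFun hfun (liftIn m k hk j))
      rw [glue_inner hk ⇑τ ⇑ρ _ j rfl, glue_inner hk' ⇑τ' ⇑ρ' _ j rfl] at h1
      show ((τ j : Fin (2*(k:ℕ))) : ℕ) = ((τ' j : Fin (2*(k:ℕ))) : ℕ)
      omega
    have hρeq : ρ = ρ' := by
      apply Equiv.coe_fn_injective
      funext j
      apply Fin.ext
      have h1 := congrArg Fin.val (congrFun hfun (liftOut m k hk j))
      rw [glue_outer hk ⇑τ ⇑ρ _ j rfl, glue_outer hk' ⇑τ' ⇑ρ' _ j rfl] at h1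
      show ((ρ j : Fin (2*(m-(k:ℕ)))) : ℕ) = ((ρ' j : Fin (2*(m-(k:ℕ)))) : ℕ)
      omega
    subst hτeq; subst hρeq
    rfl
  · rintro ⟨σ, h1, h2, h3⟩
    obtain ⟨k, hk, f, g, hf1, hf2, hf3, hg1, hg2, hg3, hglue⟩ :=
      exists_glue_eq m σ h1 h2 h3
    refine ⟨⟨⟨k, by omega⟩, ⟨hf1.toPerm, fun i => hf1 i, hf2, hf3⟩,
      ⟨hg1.toPerm, fun i => hg1 i, hg2, hg3⟩⟩, ?_⟩
    apply Subtype.ext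
    apply Equiv.coe_fn_injective
    exact hglue
  
theorem card_NCM : ∀ n : ℕ, Nat.card (NCM n) = catalan n := by
  intro n
  induction n using Nat.strong_induction_on with
  | _ n ih =>
    match n with
    | 0 =>
      rw [catalan_zero]
      haveI : Unique (NCM 0) := by
        refine ⟨⟨⟨1, fun i => rfl, fun i => absurd i.isLt (by omega),
          fun ⟨i, _⟩ => absurd i.isLt (by omega)⟩⟩, fun a => ?_⟩
        apply Subtype.ext
        apply Equiv.coe_fn_injective
        funext i
        exact absurd i.isLt (by omega)
      exact Nat.card_unique
    | m+1 =>
      have hbij := (glueNCM_bijective m)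
      have hcard := (Nat.card_eq_of_bijective _ hbij).symm
      rw [hcard]
      haveI : ∀ k : ℕ, Fintype (NCM k) := fun k => by
        unfold NCM; infer_instance
      rw [Nat.card_eq_fintype_card, Fintype.card_sigma]
      rw [catalan_succ]
      congr 1
      funext k
      rw [Fintype.card_prod, ← Nat.card_eq_fintype_card, ← Nat.card_eq_fintype_card,
        ih k (by have := k.isLt; omega), ih (m - k) (by omega)]

/-- The number of crossingless matchings of `2n` points, i.e. of fixed-point-free
involutions `σ` of `Fin (2n)` with no indices `i < j < σ(i) < σ(j)`, equals the
`n`-th Catalan number. -/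
theorem card_noncrossing_matchings (n : ℕ) :
    Nat.card {σ : Equiv.Perm (Fin (2 * n)) //
        (∀ i, σ (σ i) = i) ∧ (∀ i, σ i ≠ i) ∧
        ¬∃ i j : Fin (2 * n), i < j ∧ j < σ i ∧ σ i < σ j} = catalan n :=
  card_NCM n
end

section
/- Let X be a finite type and let a, b be fixed-point-free involutive permutations of X. Then the number of orbits of the composite permutation a∘b on X (counting fixed points as singleton orbits) equals twice the number of orbits of the subgroup of permutations generated by a and b acting on X. Consequently, the number κ(a,b) of closed loops obtained by gluing the matching diagrams of a and b along X is half the number of orbits of a∘b. -/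
/-- Let `a, b` be fixed-point-free involutive permutations of a finite type `X`.
Then the number of orbits of the composite permutation `a ∘ b` on `X` equals twice
the number of orbits of the subgroup generated by `a` and `b` acting on `X`.
Consequently, the number `κ(a,b)` of closed loops obtained by gluing the matching
diagrams of `a` and `b` (i.e. the number of orbits of the subgroup generated by
`a` and `b`) is half the number of orbits of `a ∘ b`. -/
theorem orbits_comp_eq_two_mul_orbits_closure {X : Type*} [Finite X]
    (a b : Equiv.Perm X)
    (ha : ∀ x, a (a x) = x) (ha' : ∀ x, a x ≠ x)
    (hb : ∀ x, b (b x) = x) (hb' : ∀ x, b x ≠ x) :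
    Nat.card (MulAction.orbitRel.Quotient (Subgroup.zpowers (a * b)) X) =
        2 * Nat.card (MulAction.orbitRel.Quotient
          (Subgroup.closure {a, b} : Subgroup (Equiv.Perm X)) X) ∧
      Nat.card (MulAction.orbitRel.Quotient
          (Subgroup.closure {a, b} : Subgroup (Equiv.Perm X)) X) =
        Nat.card (MulAction.orbitRel.Quotient (Subgroup.zpowers (a * b)) X) / 2 := by
  classical
  set c : Equiv.Perm X := a * b with hc
  have haa : a * a = 1 := Equiv.ext fun x => ha x
  have hbb : b * b = 1 := Equiv.ext fun x => hb x
  have hainv : a⁻¹ = a := inv_eq_of_mul_eq_one_left haa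
  have hbinv : b⁻¹ = b := inv_eq_of_mul_eq_one_left hbb
  have hcinv : a * c * a⁻¹ = c⁻¹ := by
    rw [hc, mul_inv_rev, hainv, hbinv]
    calc a * (a * b) * a = a * a * b * a := by rw [mul_assoc a a b]
      _ = b * a := by rw [haa, one_mul]
  have hconj : ∀ n : ℤ, a * c ^ n = c ^ (-n) * a := by
    intro n
    have h := (conj_zpow (i := n) (a := a) (b := c)).symm
    rw [hcinv, inv_zpow, ← zpow_neg, hainv] at h
    calc a * c ^ n = a * c ^ n * a * a := by rw [mul_assoc, haa, mul_one]
      _ = c ^ (-n) * a := by rw [h]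
  have hconj' : ∀ n : ℤ, c ^ n * a = a * c ^ (-n) := by
    intro n
    have := hconj (-n)
    rw [neg_neg] at this
    exact this.symm
  have hab : b = a * c := by rw [hc, ← mul_assoc, haa, one_mul]
  -- key lemma: (a*b)^n x ≠ a x
  have hkey : ∀ (n : ℤ) (x : X), (c ^ n) x ≠ a x := by
    intro n x hx
    rcases Int.even_or_odd n with ⟨j, hj⟩ | ⟨j, hj⟩
    · have e1 : a ((c ^ j) x) = (c ^ (-j)) (a x) := by
        rw [← Equiv.Perm.mul_apply, hconj j, Equiv.Perm.mul_apply]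
      have e2 : (c ^ (-j)) (a x) = (c ^ j) x := by
        rw [← hx, ← Equiv.Perm.mul_apply, ← zpow_add, show -j + n = j by omega]
      exact ha' _ (e1.trans e2)
    · have e1 : b ((c ^ j) x) = (c ^ (-(1 + j))) (a x) := by
        rw [← Equiv.Perm.mul_apply, hab, mul_assoc, ← zpow_one_add, hconj (1 + j),
          Equiv.Perm.mul_apply]
      have e2 : (c ^ (-(1 + j))) (a x) = (c ^ j) x := by
        rw [← hx, ← Equiv.Perm.mul_apply, ← zpow_add, show -(1 + j) + n = j by omega]
      exact hb' _ (e1.trans e2)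
  set G := (Subgroup.closure {a, b} : Subgroup (Equiv.Perm X)) with hG
  set H := Subgroup.zpowers c with hH
  have haG : a ∈ G := Subgroup.subset_closure (by simp)
  have hbG : b ∈ G := Subgroup.subset_closure (by simp)
  have hcG : c ∈ G := by rw [hc]; exact mul_mem haG hbG
  -- decomposition of elements of G
  have hdecomp : ∀ g ∈ G, ∃ n : ℤ, g = c ^ n ∨ g = a * c ^ n := by
    intro g hg
    induction hg using Subgroup.closure_induction with
    | mem x hx =>
      rcases hx with hx | hx
      · exact ⟨0, Or.inr (by rw [hx, zpow_zero, mul_one])⟩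
      · exact ⟨1, Or.inr (by rw [hx, zpow_one, hab])⟩
    | one => exact ⟨0, Or.inl (zpow_zero c).symm⟩
    | mul x y hx hy ihx ihy =>
      obtain ⟨m, hm | hm⟩ := ihx <;> obtain ⟨n, hn | hn⟩ := ihy
      · exact ⟨m + n, Or.inl (by rw [hm, hn, zpow_add])⟩
      · refine ⟨-m + n, Or.inr ?_⟩
        rw [hm, hn, ← mul_assoc, hconj' m, mul_assoc, ← zpow_add]
      · exact ⟨m + n, Or.inr (by rw [hm, hn, mul_assoc, ← zpow_add])⟩
      · refine ⟨-m + n, Or.inl ?_⟩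
        rw [hm, hn, ← mul_assoc, mul_assoc a _ a, hconj' m, ← mul_assoc, haa, one_mul,
          ← zpow_add]
    | inv x hx ih =>
      obtain ⟨n, hn | hn⟩ := ih
      · exact ⟨-n, Or.inl (by rw [hn, zpow_neg])⟩
      · refine ⟨n, Or.inr ?_⟩
        rw [hn, mul_inv_rev, hainv, ← zpow_neg, hconj' (-n), neg_neg]
  -- orbit relations
  have hHrel : ∀ x y : X,
      (Quotient.mk'' x : MulAction.orbitRel.Quotient H X) = Quotient.mk'' y ↔
        ∃ n : ℤ, (c ^ n) y = x := by
    intro x y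
    rw [Quotient.eq'']
    change (MulAction.orbitRel H X) x y ↔ _
    rw [MulAction.orbitRel_apply]
    constructor
    · rintro ⟨⟨g, hg⟩, rfl⟩
      obtain ⟨n, rfl⟩ := hg
      exact ⟨n, rfl⟩
    · rintro ⟨n, rfl⟩
      exact ⟨⟨c ^ n, Subgroup.zpow_mem _ (Subgroup.mem_zpowers c) n⟩, rfl⟩
  have hGrel : ∀ x y : X,
      (Quotient.mk'' x : MulAction.orbitRel.Quotient G X) = Quotient.mk'' y ↔
        ∃ g ∈ G, g y = x := by
    intro x y
    rw [Quotient.eq'']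
    change (MulAction.orbitRel G X) x y ↔ _
    rw [MulAction.orbitRel_apply]
    constructor
    · rintro ⟨⟨g, hg⟩, rfl⟩
      exact ⟨g, hg, rfl⟩
    · rintro ⟨g, hg, rfl⟩
      exact ⟨⟨g, hg⟩, rfl⟩
  -- the 2-to-1 correspondence
  set f : (MulAction.orbitRel.Quotient G X) × Bool → MulAction.orbitRel.Quotient H X :=
    fun p => Quotient.mk'' (cond p.2 (a p.1.out) p.1.out) with hf
  have h3 : ∀ (r : MulAction.orbitRel.Quotient G X) (j : Bool),
      (Quotient.mk'' (cond j (a r.out) r.out) : MulAction.orbitRel.Quotient G X) = r := by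
    intro r j
    cases j
    · show Quotient.mk'' r.out = r
      exact Quotient.out_eq' r
    · show Quotient.mk'' (a r.out) = r
      conv_rhs => rw [← Quotient.out_eq' r]
      exact (hGrel _ _).mpr ⟨a, haG, rfl⟩
  have hbij : Function.Bijective f := by
    constructor
    · rintro ⟨q, i⟩ ⟨q', i'⟩ hfe
      simp only [hf] at hfe
      have hq : q = q' := by
        obtain ⟨n, hn⟩ := (hHrel _ _).mp hfe
        have h2 : (Quotient.mk'' (cond i (a q.out) q.out) :
            MulAction.orbitRel.Quotient G X) = Quotient.mk'' (cond i' (a q'.out) q'.out) :=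
          (hGrel _ _).mpr ⟨c ^ n, Subgroup.zpow_mem _ hcG n, hn⟩
        rw [h3 q i, h3 q' i'] at h2
        exact h2
      subst hq
      rcases i <;> rcases i' <;> simp only [Bool.cond_true, Bool.cond_false] at hfe
      · rfl
      · exfalso
        obtain ⟨n, hn⟩ := (hHrel _ _).mp hfe
        refine hkey (-n) q.out ?_
        conv_lhs => rw [← hn]
        rw [← Equiv.Perm.mul_apply, ← zpow_add, show -n + n = 0 by omega, zpow_zero,
          Equiv.Perm.one_apply]
      · exfalso
        obtain ⟨n, hn⟩ := (hHrel _ _).mp hfe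
        exact hkey n q.out hn
      · rfl
    · intro r
      induction r using Quotient.inductionOn' with
      | h x =>
        set q : MulAction.orbitRel.Quotient G X := Quotient.mk'' x with hq
        have h1 : (Quotient.mk'' q.out : MulAction.orbitRel.Quotient G X) = Quotient.mk'' x :=
          Quotient.out_eq' q
        obtain ⟨g, hgG, hgx⟩ := (hGrel x q.out).mp h1.symm
        obtain ⟨n, hg | hg⟩ := hdecomp g hgG
        · refine ⟨(q, false), ?_⟩
          show Quotient.mk'' q.out = Quotient.mk'' x
          refine ((hHrel x q.out).mpr ⟨n, ?_⟩).symm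
          rw [← hg]; exact hgx
        · refine ⟨(q, true), ?_⟩
          show Quotient.mk'' (a q.out) = Quotient.mk'' x
          refine ((hHrel x (a q.out)).mpr ⟨-n, ?_⟩).symm
          have e : (c ^ (-n)) (a q.out) = (c ^ (-n) * a) q.out := rfl
          rw [e, hconj' (-n), neg_neg, ← hg]
          exact hgx
  have hcard : Nat.card (MulAction.orbitRel.Quotient H X) =
      2 * Nat.card (MulAction.orbitRel.Quotient G X) := by
    rw [← Nat.card_eq_of_bijective f hbij, Nat.card_prod]
    simp [Nat.card_eq_fintype_card, mul_comm]
  refine ⟨hcard, ?_⟩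
  rw [hcard]
  omega
end

section
/- Let k be a field (or any integral domain), σ a type, and R = MvPolynomial σ k. Let N and n be natural numbers and M an N×N matrix over R such that: (i) for every index i, the diagonal entry M_{ii} has total degree at most n and its homogeneous component of total degree n is nonzero; (ii) for all indices i ≠ j, the off-diagonal entry M_{ij} has total degree strictly less than n. Then det M ≠ 0; in fact, the homogeneous component of det M in total degree N·n is nonzero. -/
open MvPolynomial

private lemma aux_rem {k : Type*} [CommRing k] {σ : Type*} {p : MvPolynomial σ k} {a : ℕ}
    (hp : p.totalDegree ≤ a) :
    p - homogeneousComponent a p = 0 ∨ (p - homogeneousComponent a p).totalDegree < a := by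
  classical
  set r := p - homogeneousComponent a p with hr
  by_cases h0 : r = 0
  · exact Or.inl h0
  · right
    have hsupp : ∀ d ∈ r.support, (d.sum fun _ e => e) < a := by
      intro d hd
      have hcoeff : coeff d r ≠ 0 := by
        simpa [MvPolynomial.mem_support_iff] using hd
      have hdeg : d.degree = d.sum fun _ e => e := rfl
      rcases lt_trichotomy (d.sum fun _ e => e) a with h | h | h
      · exact h
      · exfalso
        apply hcoeff
        rw [hr]
        simp [MvPolynomial.coeff_sub, coeff_homogeneousComponent, hdeg, h]
      · exfalso
        apply hcoeff
        have hpd : coeff d p = 0 :=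
          coeff_eq_zero_of_totalDegree_lt (lt_of_le_of_lt hp (by exact h))
        rw [hr]
        simp [MvPolynomial.coeff_sub, coeff_homogeneousComponent, hdeg, hpd,
          (by omega : ¬ (d.sum fun _ e => e) = a)]
    rw [MvPolynomial.totalDegree]
    apply Finset.sup_lt_iff ?_ |>.mpr hsupp
    · obtain ⟨d, hd⟩ : r.support.Nonempty :=
        Finset.nonempty_iff_ne_empty.mpr (by simpa [MvPolynomial.support_eq_empty] using h0)
      exact lt_of_le_of_lt (Nat.zero_le _) (hsupp d hd)

private lemma aux_mul {k : Type*} [CommRing k] {σ : Type*} {p q : MvPolynomial σ k} {a b : ℕ}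
    (hp : p.totalDegree ≤ a) (hq : q.totalDegree ≤ b) :
    homogeneousComponent (a + b) (p * q) =
      homogeneousComponent a p * homogeneousComponent b q := by
  classical
  set P := homogeneousComponent a p with hP
  set Q := homogeneousComponent b q with hQ
  have hdecomp : p * q = P * Q + P * (q - Q) + (p - P) * q := by ring
  have hPle : P.totalDegree ≤ a := (homogeneousComponent_isHomogeneous a p).totalDegree_le
  have h1 : homogeneousComponent (a + b) (P * Q) = P * Q := by
    have := homogeneousComponent_of_mem
      (MvPolynomial.IsHomogeneous.mul (homogeneousComponent_isHomogeneous a p)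
        (homogeneousComponent_isHomogeneous b q)) (m := a + b)
    simpa using this
  have h2 : homogeneousComponent (a + b) (P * (q - Q)) = 0 := by
    rcases aux_rem hq with h | h
    · rw [h, mul_zero, map_zero]
    · apply homogeneousComponent_eq_zero
      calc (P * (q - Q)).totalDegree ≤ P.totalDegree + (q - Q).totalDegree :=
            totalDegree_mul _ _
        _ < a + b := add_lt_add_of_le_of_lt hPle h
  have h3 : homogeneousComponent (a + b) ((p - P) * q) = 0 := by
    rcases aux_rem hp with h | h
    · rw [h, zero_mul, map_zero]
    · apply homogeneousComponent_eq_zero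
      calc ((p - P) * q).totalDegree ≤ (p - P).totalDegree + q.totalDegree :=
            totalDegree_mul _ _
        _ < a + b := add_lt_add_of_lt_of_le h hq
  rw [hdecomp, map_add, map_add, h1, h2, h3, add_zero, add_zero]

private lemma aux_prod {k : Type*} [CommRing k] {σ : Type*} {ι : Type*} (n : ℕ)
    (s : Finset ι) (f : ι → MvPolynomial σ k) (h : ∀ i ∈ s, (f i).totalDegree ≤ n) :
    homogeneousComponent (s.card * n) (∏ i ∈ s, f i) =
      ∏ i ∈ s, homogeneousComponent n (f i) := by
  classical
  induction s using Finset.cons_induction with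
  | empty => simp [homogeneousComponent_zero]
  | cons a s ha ih =>
    rw [Finset.prod_cons, Finset.prod_cons, Finset.card_cons]
    have hprodle : (∏ i ∈ s, f i).totalDegree ≤ s.card * n := by
      refine le_trans (totalDegree_finset_prod s f) ?_
      calc ∑ i ∈ s, (f i).totalDegree ≤ ∑ _i ∈ s, n :=
            Finset.sum_le_sum fun i hi => h i (Finset.mem_cons_of_mem hi)
        _ = s.card * n := by rw [Finset.sum_const, smul_eq_mul]
    have : (s.card + 1) * n = n + s.card * n := by ring
    rw [this, aux_mul (h a (Finset.mem_cons_self a s)) hprodle,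
      ih fun i hi => h i (Finset.mem_cons_of_mem hi)]

/-- Determinant lemma: if `M` is an `N × N` matrix over a multivariate polynomial
ring over an integral domain such that each diagonal entry has total degree at most
`n` with nonzero homogeneous component in degree `n`, and each off-diagonal entry
has total degree strictly less than `n`, then `det M ≠ 0`; in fact the homogeneous
component of `det M` in total degree `N·n` is nonzero. -/
theorem det_ne_zero_of_generic_diagonal {k : Type*} [CommRing k] [IsDomain k]
    {σ : Type*} (N n : ℕ) (M : Matrix (Fin N) (Fin N) (MvPolynomial σ k))
    (hdiag : ∀ i, (M i i).totalDegree ≤ n ∧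
      MvPolynomial.homogeneousComponent n (M i i) ≠ 0)
    (hoff : ∀ i j, i ≠ j → (M i j).totalDegree < n) :
    M.det ≠ 0 ∧ MvPolynomial.homogeneousComponent (N * n) M.det ≠ 0 := by
  classical
  have key : MvPolynomial.homogeneousComponent (N * n) M.det ≠ 0 := by
    rw [Matrix.det_apply, map_sum]
    have hmain : ∀ g : Equiv.Perm (Fin N),
        homogeneousComponent (N * n) (Equiv.Perm.sign g • ∏ i, M (g i) i) =
          Equiv.Perm.sign g • homogeneousComponent (N * n) (∏ i, M (g i) i) := by
      intro g
      rw [Units.smul_def, Units.smul_def, map_zsmul]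
    have hzero : ∀ g : Equiv.Perm (Fin N), g ≠ 1 →
        homogeneousComponent (N * n) (∏ i, M (g i) i) = 0 := by
      intro g hg
      apply homogeneousComponent_eq_zero
      obtain ⟨i0, hi0⟩ : ∃ i, g i ≠ i := by
        by_contra hc
        push_neg at hc
        exact hg (Equiv.ext hc)
      calc (∏ i, M (g i) i).totalDegree ≤ ∑ i, (M (g i) i).totalDegree :=
            totalDegree_finset_prod _ _
        _ < ∑ _i : Fin N, n := by
            apply Finset.sum_lt_sum (f := fun i => (M (g i) i).totalDegree) (g := fun _ => n)
            · intro i _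
              by_cases h : g i = i
              · rw [h]; exact (hdiag i).1
              · exact le_of_lt (hoff _ _ h)
            · exact ⟨i0, Finset.mem_univ i0, hoff _ _ hi0⟩
        _ = N * n := by simp [Finset.sum_const, mul_comm]
    rw [Finset.sum_eq_single (1 : Equiv.Perm (Fin N))
      (fun g _ hg => by rw [hmain g, hzero g hg, smul_zero])
      (fun h => absurd (Finset.mem_univ _) h)]
    rw [hmain 1]
    simp only [Equiv.Perm.sign_one, one_smul, Equiv.Perm.one_apply]
    have hN : N * n = (Finset.univ : Finset (Fin N)).card * n := by simp
    rw [hN, aux_prod n Finset.univ (fun i => M i i) (fun i _ => (hdiag i).1)]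
    exact Finset.prod_ne_zero_iff.mpr fun i _ => (hdiag i).2
  refine ⟨fun h => key ?_, key⟩
  rw [h, map_zero]
end
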